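/- Let G=(V,E) be a connected cubic (3-regular) simple graph on n vertices, and let S ⊊ V be such that G[S] is a proportionally dense subgraph. Then |S| ≤ ⌊(2n+1)/3⌋. -/
import Mathlib


open SimpleGraph

/-- Number of neighbors of `v` inside `T`. -/
noncomputable def degIn {W : Type*} (G : SimpleGraph W) (T : Set W) (v : W) : ℕ :=
  (T ∩ G.neighborSet v).ncard

/-- `G[S]` is a proportionally dense subgraph. -/
def IsPDS {W : Type*} (G : SimpleGraph W) (S : Set W) : Prop :=
  S ⊂ Set.univ ∧ 2 ≤ S.ncard ∧
    ∀ u ∈ S, degIn G Sᶜ u * (S.ncard - 1) ≤ degIn G S u * Sᶜ.ncard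

/-- In a connected cubic graph on `n` vertices, any PDS has size at most
`⌊(2n+1)/3⌋`. -/
theorem pds_upper_bound_cubic {V : Type*} [Fintype V] (G : SimpleGraph V)
    (hconn : G.Connected) (hcubic : ∀ v : V, (G.neighborSet v).ncard = 3)
    (S : Set V) (hPDS : IsPDS G S) :
    S.ncard ≤ (2 * Fintype.card V + 1) / 3 := by
  obtain ⟨hsub, hs2, hineq⟩ := hPDS
  by_contra hcon
  push_neg at hcon
  rw [Nat.div_lt_iff_lt_mul (by norm_num)] at hcon
  -- hcon : 2 * card V + 1 < S.ncard * 3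
  have hcard : S.ncard + Sᶜ.ncard = Fintype.card V := by
    rw [Set.ncard_add_ncard_compl, Nat.card_eq_fintype_card]
  -- every vertex of S has all its neighbors in S
  have hclaim : ∀ u ∈ S, degIn G Sᶜ u = 0 := by
    intro u hu
    have hsum : degIn G S u + degIn G Sᶜ u = 3 := by
      rw [← hcubic u]
      unfold degIn
      rw [← Set.ncard_union_eq]
      · congr 1
        rw [← Set.union_inter_distrib_right, Set.union_compl_self, Set.univ_inter]
      · exact Set.disjoint_of_subset (Set.inter_subset_left)
          (Set.inter_subset_left) disjoint_compl_right
    have h := hineq u hu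
    set a := degIn G S u with ha
    set b := degIn G Sᶜ u with hb
    have hb3 : b ≤ 3 := by omega
    have ha3 : a ≤ 3 := by omega
    interval_cases a <;> interval_cases b <;> omega
  -- connectedness gives a boundary edge
  obtain ⟨u, hu⟩ : S.Nonempty := Set.nonempty_of_ncard_ne_zero (by omega)
  obtain ⟨w, -, hw⟩ := Set.exists_of_ssubset hsub
  obtain ⟨p⟩ := hconn u w
  obtain ⟨d, -, hdS, hdS'⟩ := p.exists_boundary_dart S hu hw
  have h1 : d.snd ∈ Sᶜ ∩ G.neighborSet d.fst := ⟨hdS', d.adj⟩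
  have h0 := hclaim d.fst hdS
  unfold degIn at h0
  rw [Set.ncard_eq_zero (Set.toFinite _)] at h0
  rw [h0] at h1
  exact h1
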